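/- There is no strictly increasing chain of length greater than 3 of affine Boolean functions ordered by pointwise entailment; consequently, classical propositional logic cannot be conservatively translated into its affine fragment CPC↾_{≡,¬}. -/

import Mathlib

/-- `f` is affine over GF(2): `f(x) = Σ_{i∈I} x_i + c (mod 2)`. -/
def AffineFun {n : ℕ} (f : (Fin n → Bool) → Bool) : Prop :=
  ∃ (s : Finset (Fin n)) (c : ZMod 2), ∀ x : Fin n → Bool,
    (if f x then (1 : ZMod 2) else 0) = (∑ i ∈ s, if x i then (1 : ZMod 2) else 0) + c

/-- Formulas of classical propositional logic (a functionally complete language). -/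
inductive PropForm : Type
  | var : ℕ → PropForm
  | bot : PropForm
  | top : PropForm
  | neg : PropForm → PropForm
  | and : PropForm → PropForm → PropForm
  | or : PropForm → PropForm → PropForm
  | imp : PropForm → PropForm → PropForm

/-- Boolean evaluation. -/
def PropForm.eval (v : ℕ → Bool) : PropForm → Bool
  | .var n => v n
  | .bot => false
  | .top => true
  | .neg φ => !(φ.eval v)
  | .and φ ψ => φ.eval v && ψ.eval v
  | .or φ ψ => φ.eval v || ψ.eval v
  | .imp φ ψ => !(φ.eval v) || ψ.eval v

/-- Classical consequence. -/
def Cpc (Γ : Set PropForm) (φ : PropForm) : Prop :=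
  ∀ v : ℕ → Bool, (∀ ψ ∈ Γ, ψ.eval v = true) → φ.eval v = true

/-- Formulas of the affine fragment `CPC↾_{≡,¬}`, built from `≡` and `¬`. -/
inductive AForm : Type
  | var : ℕ → AForm
  | iff : AForm → AForm → AForm
  | neg : AForm → AForm

/-- Boolean evaluation of affine formulas. -/
def AForm.eval (v : ℕ → Bool) : AForm → Bool
  | .var n => v n
  | .iff φ ψ => φ.eval v == ψ.eval v
  | .neg φ => !(φ.eval v)

/-- Consequence of the affine fragment. -/
def CpcA (Γ : Set AForm) (φ : AForm) : Prop :=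
  ∀ v : ℕ → Bool, (∀ ψ ∈ Γ, ψ.eval v = true) → φ.eval v = true

private def ind (b : Bool) : ZMod 2 := if b then 1 else 0

private lemma ind_inj : ∀ a b : Bool, ind a = ind b → a = b := by decide

private lemma ind_xor3 : ∀ a b c : Bool,
    ind (xor a (xor b c)) = ind a + ind b + ind c := by decide

private lemma zmod2_add_self : ∀ c : ZMod 2, c + c = 0 := by decide

private lemma affine3 {n : ℕ} {f : (Fin n → Bool) → Bool} (hf : AffineFun f)
    (x y z : Fin n → Bool) :
    ind (f (fun i => xor (x i) (xor (y i) (z i)))) = ind (f x) + ind (f y) + ind (f z) := by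
  obtain ⟨s, c, h⟩ := hf
  show (if f (fun i => xor (x i) (xor (y i) (z i))) then (1 : ZMod 2) else 0) = _
  rw [h]
  unfold ind
  rw [h, h, h]
  have hsum : (∑ i ∈ s, if xor (x i) (xor (y i) (z i)) then (1 : ZMod 2) else 0)
      = ∑ i ∈ s, ((if x i then (1 : ZMod 2) else 0) + (if y i then (1 : ZMod 2) else 0)
          + (if z i then (1 : ZMod 2) else 0)) := by
    refine Finset.sum_congr rfl fun i _ => ?_
    have := ind_xor3 (x i) (y i) (z i)
    simpa [ind] using this
  rw [hsum, Finset.sum_add_distrib, Finset.sum_add_distrib]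
  have hc := zmod2_add_self c
  ring_nf
  linear_combination -hc

private lemma affine_key {n : ℕ} {f g : (Fin n → Bool) → Bool}
    (hf : AffineFun f) (hg : AffineFun g) (hle : ∀ x, f x ≤ g x)
    (x0 : Fin n → Bool) (h0f : f x0 = false) (h0g : g x0 = true) :
    (∀ x, f x = false) ∨ (∀ x, g x = true) := by
  by_contra hc
  push_neg at hc
  obtain ⟨⟨y, hy⟩, ⟨z, hz⟩⟩ := hc
  have hfy : f y = true := by cases h : f y <;> simp_all
  have hgz : g z = false := by cases h : g z <;> simp_all
  have hgy : g y = true := by have := hle y; rw [hfy] at this; exact le_antisymm le_top this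
  have hfz : f z = false := by have := hle z; rw [hgz] at this; exact le_antisymm this bot_le
  have h1 := affine3 hf x0 y z
  have h2 := affine3 hg x0 y z
  rw [h0f, hfy, hfz] at h1
  rw [h0g, hgy, hgz] at h2
  have hfw : f (fun i => xor (x0 i) (xor (y i) (z i))) = true := by
    apply ind_inj; rw [h1]; decide
  have hgw : g (fun i => xor (x0 i) (xor (y i) (z i))) = false := by
    apply ind_inj; rw [h2]; decide
  have := hle (fun i => xor (x0 i) (xor (y i) (z i)))
  rw [hfw, hgw] at this
  exact absurd this (by decide)

private lemma bool_neg3 : ∀ a b c : Bool,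
    (!(xor a (xor b c))) = xor (!a) (xor (!b) (!c)) := by decide

private lemma bool_iff3 : ∀ a1 a2 a3 b1 b2 b3 : Bool,
    (xor a1 (xor a2 a3) == xor b1 (xor b2 b3))
      = xor (a1 == b1) (xor (a2 == b2) (a3 == b3)) := by decide

private lemma aform3 (α : AForm) (x y z : ℕ → Bool) :
    α.eval (fun i => xor (x i) (xor (y i) (z i)))
      = xor (α.eval x) (xor (α.eval y) (α.eval z)) := by
  induction α with
  | var n => rfl
  | neg φ ih =>
    simp only [AForm.eval, ih]
    exact bool_neg3 _ _ _
  | iff φ ψ ih1 ih2 =>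
    simp only [AForm.eval, ih1, ih2]
    exact bool_iff3 _ _ _ _ _ _

private lemma aform_key {α β : AForm} (hle : ∀ v, α.eval v ≤ β.eval v)
    (v0 : ℕ → Bool) (h0a : α.eval v0 = false) (h0b : β.eval v0 = true) :
    (∀ v, α.eval v = false) ∨ (∀ v, β.eval v = true) := by
  by_contra hc
  push_neg at hc
  obtain ⟨⟨y, hy⟩, ⟨z, hz⟩⟩ := hc
  have hay : α.eval y = true := by cases h : α.eval y <;> simp_all
  have hbz : β.eval z = false := by cases h : β.eval z <;> simp_all
  have hby : β.eval y = true := by have := hle y; rw [hay] at this; exact le_antisymm le_top this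
  have haz : α.eval z = false := by have := hle z; rw [hbz] at this; exact le_antisymm this bot_le
  have h1 := aform3 α v0 y z
  have h2 := aform3 β v0 y z
  rw [h0a, hay, haz] at h1
  rw [h0b, hby, hbz] at h2
  have := hle (fun i => xor (v0 i) (xor (y i) (z i)))
  rw [h1, h2] at this
  exact absurd this (by decide)

/-- There is no strictly increasing chain (under pointwise entailment) of affine Boolean
functions of length more than 3; consequently, classical propositional logic cannot be
conservatively translated into its affine fragment `CPC↾_{≡,¬}`. -/
theorem affine_no_long_chain_and_cpc_not_translatable :
    (¬ ∃ (n : ℕ) (g : Fin 4 → ((Fin n → Bool) → Bool)),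
      (∀ i, AffineFun (g i)) ∧
      ∀ i j : Fin 4, i < j → (∀ x, g i x ≤ g j x) ∧ g i ≠ g j) ∧
    (¬ ∃ f : PropForm → AForm,
      ∀ (Γ : Set PropForm) (φ : PropForm), Cpc Γ φ ↔ CpcA (f '' Γ) (f φ)) := by
  constructor
  · rintro ⟨n, g, haff, hch⟩
    have diff : ∀ i j : Fin 4, i < j → ∃ x, g i x = false ∧ g j x = true := by
      intro i j hij
      obtain ⟨hle, hne⟩ := hch i j hij
      have hx : ∃ x, g i x ≠ g j x := by
        by_contra h; push_neg at h; exact hne (funext h)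
      obtain ⟨x, hx⟩ := hx
      have hlex := hle x
      cases hgi : g i x <;> cases hgj : g j x
      · exact absurd (hgi.trans hgj.symm) hx
      · exact ⟨x, hgi, hgj⟩
      · rw [hgi, hgj] at hlex; exact absurd hlex (by decide)
      · exact absurd (hgi.trans hgj.symm) hx
    obtain ⟨x12, h12f, h12t⟩ := diff 1 2 (by decide)
    rcases affine_key (haff 1) (haff 2) (hch 1 2 (by decide)).1 x12 h12f h12t with h | h
    · obtain ⟨x01, _, h01t⟩ := diff 0 1 (by decide)
      rw [h x01] at h01t; exact absurd h01t (by decide)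
    · obtain ⟨x23, h23f, _⟩ := diff 2 3 (by decide)
      rw [h x23] at h23f; exact absurd h23f (by decide)
  · rintro ⟨t, ht⟩
    set φ1 : PropForm := .var 0 with hφ1
    set φ2 : PropForm := .or (.var 0) (.var 1) with hφ2
    -- φ1 ⊨ φ2
    have h12 : Cpc {φ1} φ2 := by
      intro v hv
      have := hv φ1 rfl
      simp [PropForm.eval, hφ1, hφ2] at this ⊢
      exact Or.inl this
    -- φ2 ⊭ φ1
    have n12 : ¬ Cpc {φ2} φ1 := by
      intro h
      have := h (fun i => if i = 1 then true else false) (by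
        intro ψ hψ; rw [Set.mem_singleton_iff] at hψ; subst hψ
        simp [PropForm.eval, hφ1, hφ2])
      simp [PropForm.eval, hφ1, hφ2] at this
    -- φ1 ⊭ ⊥
    have n01 : ¬ Cpc {φ1} .bot := by
      intro h
      have := h (fun _ => true) (by
        intro ψ hψ; rw [Set.mem_singleton_iff] at hψ; subst hψ
        simp [PropForm.eval, hφ1, hφ2])
      simp [PropForm.eval] at this
    -- ⊤ ⊭ φ2
    have n23 : ¬ Cpc {PropForm.top} φ2 := by
      intro h
      have := h (fun _ => false) (by
        intro ψ hψ; rw [Set.mem_singleton_iff] at hψ; subst hψ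
        simp [PropForm.eval])
      simp [PropForm.eval, hφ1, hφ2] at this
    -- translate
    have H12 : CpcA {t φ1} (t φ2) := by
      have := (ht {φ1} φ2).mp h12; rwa [Set.image_singleton] at this
    have hle : ∀ v, (t φ1).eval v ≤ (t φ2).eval v := by
      intro v
      cases h : (t φ1).eval v
      · exact bot_le
      · have := H12 v (by intro ψ hψ; rw [Set.mem_singleton_iff] at hψ; subst hψ; exact h)
        rw [this]
    have tne : ∀ (a b : PropForm), ¬ Cpc {a} b →
        ∃ v, (t a).eval v = true ∧ (t b).eval v = false := by
      intro a b hnab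
      have : ¬ CpcA {t a} (t b) := by
        intro h; exact hnab ((ht {a} b).mpr (by rwa [Set.image_singleton]))
      rw [CpcA] at this; push_neg at this
      obtain ⟨v, hv1, hv2⟩ := this
      exact ⟨v, hv1 (t a) rfl, by cases h : (t b).eval v <;> simp_all⟩
    obtain ⟨v12, h12t', h12f'⟩ := tne φ2 φ1 n12
    rcases aform_key hle v12 h12f' h12t' with h | h
    · obtain ⟨v01, h01t', _⟩ := tne φ1 .bot n01
      rw [h v01] at h01t'; exact absurd h01t' (by decide)
    · obtain ⟨_, _, h23f'⟩ := tne .top φ2 n23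
      rw [h _] at h23f'; exact absurd h23f' (by decide)
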